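/- Let G be a finite-dimensional Lie algebra with dual G*, and let f, g : G* → ℝ be differentiable functions that are Casimir functions at a point l ∈ G*, i.e. ad*_{∇f(l)} l = 0 and ad*_{∇g(l)} l = 0, where ∇f(l) ∈ G is the gradient defined by Df(l)(ξ) = ⟨ξ, ∇f(l)⟩. Let R : G → G be any linear map and define the R-bracket {f,g}_R(l) := ⟨l, [R∇f(l), ∇g(l)] + [∇f(l), R∇g(l)]⟩. Then {f,g}_R(l) = 0; in particular Casimir functions commute with respect to every R-deformed Lie–Poisson bracket. -/
import Mathlib

/-- Casimir functions commute with respect to every `R`-deformed Lie–Poisson bracket: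
if `∇f(l)`, `∇g(l)` are the gradients of `f`, `g` at `l ∈ G*` (in the Gateaux sense
`D f(l)(ξ) = ⟨ξ, ∇f(l)⟩`) and `ad*_{∇f(l)} l = 0 = ad*_{∇g(l)} l`, then for any linear
map `R : G → G` one has `{f,g}_R(l) = ⟨l, [R∇f(l), ∇g(l)] + [∇f(l), R∇g(l)]⟩ = 0`. -/
theorem casimirs_commute_R_bracket
    {G : Type*} [LieRing G] [LieAlgebra ℝ G] [FiniteDimensional ℝ G]
    (f g : Module.Dual ℝ G → ℝ) (l : Module.Dual ℝ G) (gradf gradg : G)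
    (hgradf : ∀ ξ : Module.Dual ℝ G, HasDerivAt (fun s : ℝ => f (l + s • ξ)) (ξ gradf) 0)
    (hgradg : ∀ ξ : Module.Dual ℝ G, HasDerivAt (fun s : ℝ => g (l + s • ξ)) (ξ gradg) 0)
    (hf : ∀ X : G, l ⁅gradf, X⁆ = 0)
    (hg : ∀ X : G, l ⁅gradg, X⁆ = 0)
    (R : G →ₗ[ℝ] G) :
    l (⁅R gradf, gradg⁆ + ⁅gradf, R gradg⁆) = 0 := by
  have h1 : l ⁅R gradf, gradg⁆ = 0 := by
    rw [← lie_skew, map_neg, hg, neg_zero]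
  simp [map_add, h1, hf]
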